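/- Let n ≥ 40 be an integer and α ∈ (0, √n). Then ∫_0^{α/√n} (1-t²)^{(n-3)/2} dt > (1/(α√n)) (1 - e^{-0.475 α²}). -/

import Mathlib

set_option maxHeartbeats 1600000 in
theorem stmt_10 (n : ℕ) (hn : 40 ≤ n) (α : ℝ) (hα : α ∈ Set.Ioo 0 (Real.sqrt n)) :
    (∫ t in (0 : ℝ)..(α / Real.sqrt n), (1 - t ^ 2) ^ (((n : ℝ) - 3) / 2)) >
      1 / (α * Real.sqrt n) * (1 - Real.exp (-0.475 * α ^ 2)) := by
  obtain ⟨hα0, hαs⟩ := hα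
  have hn40 : (40:ℝ) ≤ (n:ℝ) := by exact_mod_cast hn
  have hs : 0 < Real.sqrt n := lt_trans hα0 hαs
  set s := Real.sqrt n with hs_def
  have hs2 : s ^ 2 = n := Real.sq_sqrt (by positivity)
  set a := α / s with ha_def
  have ha0 : 0 < a := div_pos hα0 hs
  have ha1 : a < 1 := (div_lt_one hs).mpr hαs
  have ha2 : a ^ 2 = α ^ 2 / n := by
    rw [ha_def, div_pow, hs2]
  have h1a2 : 0 < 1 - a ^ 2 := by nlinarith
  set b := Real.sqrt (1 - a ^ 2) with hb_def
  have hb0 : 0 < b := Real.sqrt_pos.mpr h1a2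
  have hb2 : b ^ 2 = 1 - a ^ 2 := Real.sq_sqrt h1a2.le
  have hb1 : b < 1 := by nlinarith
  set c := (1 - b) / a with hc_def
  have hc0 : 0 < c := div_pos (by linarith) ha0
  have hca : c * a = 1 - b := div_mul_cancel₀ _ ha0.ne'
  clear_value s a b c
  have hkey : a * (1 + c ^ 2) = 2 * c := by
    have h : (1 - c * a) ^ 2 = 1 - a ^ 2 := by rw [hca]; nlinarith
    nlinarith [ha0]
  have hcle : c ≤ a := by
    have hge : 1 - a ^ 2 ≤ b := by nlinarith
    rw [hc_def, div_le_iff₀ ha0]; nlinarith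
  set m := n - 3 with hm_def
  have h3n : 3 ≤ n := by omega
  have hmcast : ((m:ℝ)) = (n:ℝ) - 3 := by
    rw [hm_def, Nat.cast_sub h3n]; norm_num
  have hecast : ((m:ℝ) + 1) = (n:ℝ) - 2 := by rw [hmcast]; ring
  have he0 : 0 ≤ ((n:ℝ) - 3) / 2 := by linarith
  -- pointwise bound
  have hpt : ∀ t ∈ Set.Icc (0:ℝ) a, (1 - c*t)^m ≤ (1 - t^2) ^ (((n:ℝ)-3)/2) := by
    intro t ht
    obtain ⟨ht0, hta⟩ := ht
    have hct : 0 ≤ 1 - c * t := by nlinarith [mul_le_mul_of_nonneg_left hta hc0.le]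
    have hsq : (1 - c*t)^2 ≤ 1 - t^2 := by
      nlinarith [mul_le_mul_of_nonneg_right hta (by positivity : (0:ℝ) ≤ 1 + c^2)]
    have hm2 : 2 * (((n:ℝ)-3)/2) = (m:ℝ) := by rw [hmcast]; ring
    have heq : ((1 - c*t)^2 : ℝ) ^ (((n:ℝ)-3)/2) = (1-c*t)^m := by
      rw [← Real.rpow_natCast (1-c*t) m, ← hm2, ← Real.rpow_natCast (1-c*t) 2,
        ← Real.rpow_mul hct]
      norm_num
    rw [← heq]
    exact Real.rpow_le_rpow (sq_nonneg _) hsq he0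
  -- integrability
  have hInt1 : IntervalIntegrable (fun t : ℝ => (1 - c*t)^m) MeasureTheory.volume 0 a :=
    ((continuous_const.sub (continuous_const.mul continuous_id)).pow m).intervalIntegrable _ _
  have hInt2 : IntervalIntegrable (fun t : ℝ => (1 - t^2) ^ (((n:ℝ)-3)/2))
      MeasureTheory.volume 0 a := by
    apply ContinuousOn.intervalIntegrable
    apply ContinuousOn.rpow_const
    · exact (continuous_const.sub (continuous_pow 2)).continuousOn
    · intro t _
      right; exact he0
  have hmono := intervalIntegral.integral_mono_on ha0.le hInt1 hInt2 hpt
  -- FTC evaluation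
  have hFTC : (∫ t in (0:ℝ)..a, (1 - c*t)^m) = (1 - b^(m+1)) / (c * ((m:ℝ)+1)) := by
    have hderiv : ∀ t ∈ Set.uIcc (0:ℝ) a,
        HasDerivAt (fun t : ℝ => -(1 - c*t)^(m+1) / (c * ((m:ℝ)+1))) ((1 - c*t)^m) t := by
      intro t _
      have h1 : HasDerivAt (fun t : ℝ => 1 - c*t) (-c) t := by
        simpa using ((hasDerivAt_id t).const_mul c).const_sub (1:ℝ)
      have h2 := ((h1.pow (m+1)).neg).div_const (c * ((m:ℝ)+1))
      refine h2.congr_deriv ?_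
      have hmm : m + 1 - 1 = m := by omega
      rw [hmm]
      push_cast
      field_simp
    rw [intervalIntegral.integral_eq_sub_of_hasDerivAt hderiv hInt1]
    have h1ca : 1 - c * a = b := by rw [hca]; ring
    rw [h1ca]
    norm_num
    ring
  -- numerator bound
  have hexp : b ^ (m+1) ≤ Real.exp (-0.475 * α^2) := by
    have h1 : b ≤ Real.exp (-(a^2)/2) := by
      have hsq : b^2 ≤ (Real.exp (-(a^2)/2))^2 := by
        have he2 : (Real.exp (-(a^2)/2))^2 = Real.exp (-(a^2)) := by
          rw [← Real.exp_nat_mul]; congr 1; push_cast; ring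
        rw [he2, hb2]
        nlinarith [Real.add_one_le_exp (-(a^2))]
      exact (pow_le_pow_iff_left₀ hb0.le (Real.exp_pos _).le two_ne_zero).mp hsq
    calc b ^ (m+1) ≤ (Real.exp (-(a^2)/2)) ^ (m+1) := pow_le_pow_left₀ hb0.le h1 _
      _ = Real.exp (((m:ℝ)+1) * (-(a^2)/2)) := by rw [← Real.exp_nat_mul]; congr 1; push_cast; ring
      _ ≤ Real.exp (-0.475 * α^2) := by
          apply Real.exp_le_exp.mpr
          rw [hecast, ha2]
          have hq0 : 0 ≤ α^2 / n := by positivity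
          have hq : α^2 / n * n = α^2 := div_mul_cancel₀ _ (by positivity)
          nlinarith [mul_nonneg hq0 (sub_nonneg.mpr hn40)]
  have hNpos : 0 < 1 - Real.exp (-0.475 * α^2) := by
    have : Real.exp (-0.475 * α^2) < 1 := Real.exp_lt_one_iff.mpr (by nlinarith)
    linarith
  have hbpos : 0 < 1 - b^(m+1) := by linarith
  have hden_pos : 0 < c * ((m:ℝ)+1) := by
    apply mul_pos hc0; rw [hecast]; linarith
  have han : a * n = α * s := by
    rw [ha_def]; field_simp; nlinarith [hs2]
  have hden_lt : c * ((m:ℝ)+1) < α * s := by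
    calc c * ((m:ℝ)+1) ≤ a * ((m:ℝ)+1) := by
          apply mul_le_mul_of_nonneg_right hcle; rw [hecast]; linarith
      _ < a * n := by
          apply mul_lt_mul_of_pos_left _ ha0
          rw [hecast]; linarith
      _ = α * s := han
  calc 1 / (α * s) * (1 - Real.exp (-0.475 * α^2))
      = (1 - Real.exp (-0.475 * α^2)) / (α * s) := by ring
    _ < (1 - Real.exp (-0.475 * α^2)) / (c * ((m:ℝ)+1)) :=
        div_lt_div_of_pos_left hNpos hden_pos hden_lt
    _ ≤ (1 - b^(m+1)) / (c * ((m:ℝ)+1)) := by gcongr <;> linarith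
    _ = ∫ t in (0:ℝ)..a, (1 - c*t)^m := hFTC.symm
    _ ≤ _ := hmono
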